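/- Define the quadratic forms Q₁(u,v,w) := u² + v² − w², Q₂(u,v,w) := u² + v², Q₃(u,v,w) := −24u² − 15v² + w² on ℝ³. Let ℝP¹ be the quotient topological space of ℝ²∖{0} by the scaling action of ℝ∖{0}, and let S₁ := { [t₀ : t₁] ∈ ℝP¹ : ∃ (u,v,w) ∈ ℝ³∖{0}, t₀²Q₁(u,v,w) + 2t₀t₁Q₂(u,v,w) + t₁²Q₃(u,v,w) ≥ 0 }. Then S₁ has exactly two connected components. (Consequently the real locus Y(ℝ) of the associated double cover has exactly two connected components; in this example the real isotopy class of the discriminant quartic Δ is two nested ovals.) -/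

import Mathlib

/-- The scaling relation on nonzero vectors of `ℝⁿ`. -/
def projRel (n : ℕ) (v w : {x : Fin n → ℝ // x ≠ 0}) : Prop :=
  ∃ c : ℝ, c ≠ 0 ∧ c • (v : Fin n → ℝ) = (w : Fin n → ℝ)

/-- The real projective space `ℝPⁿ⁻¹`, as the quotient topological space of `ℝⁿ ∖ {0}` by the
scaling action of `ℝ ∖ {0}`. -/
def RP (n : ℕ) : Type := Quot (projRel n)

instance (n : ℕ) : TopologicalSpace (RP n) :=
  inferInstanceAs (TopologicalSpace (Quot (projRel n)))

/-- `Q₁(u,v,w) = u² + v² − w²`. -/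
def Q₁ (u v w : ℝ) : ℝ := u ^ 2 + v ^ 2 - w ^ 2

/-- `Q₂(u,v,w) = u² + v²`. -/
def Q₂ (u v w : ℝ) : ℝ := u ^ 2 + v ^ 2

/-- `Q₃(u,v,w) = −24u² − 15v² + w²`. -/
def Q₃ (u v w : ℝ) : ℝ := -24 * u ^ 2 - 15 * v ^ 2 + w ^ 2

namespace TwoOvals

abbrev V := {x : Fin 2 → ℝ // x ≠ 0}

lemma projRel_equivalence (n : ℕ) : Equivalence (projRel n) where
  refl v := ⟨1, one_ne_zero, one_smul _ _⟩
  symm {v w} := fun ⟨c, hc, h⟩ => ⟨c⁻¹, inv_ne_zero hc, by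
    rw [← h, smul_smul, inv_mul_cancel₀ hc, one_smul]⟩
  trans {u v w} := fun ⟨c, hc, h⟩ ⟨d, hd, h'⟩ => ⟨d * c, mul_ne_zero hd hc, by
    rw [mul_smul, h, h']⟩

lemma mk_eq_mk_iff {n : ℕ} {a b : {x : Fin n → ℝ // x ≠ 0}} :
    Quot.mk (projRel n) a = Quot.mk (projRel n) b ↔ projRel n a b :=
  Quot.eq.trans (projRel_equivalence n).eqvGen_iff

/-- coefficient of `v²`. -/
def bf (t : Fin 2 → ℝ) : ℝ := t 0 ^ 2 + 2 * t 0 * t 1 - 15 * t 1 ^ 2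

/-- coefficient of `w²`. -/
def cf (t : Fin 2 → ℝ) : ℝ := t 1 ^ 2 - t 0 ^ 2

lemma bf_smul (c : ℝ) (t : Fin 2 → ℝ) : bf (c • t) = c ^ 2 * bf t := by
  simp only [bf, Pi.smul_apply, smul_eq_mul]; ring

lemma cf_smul (c : ℝ) (t : Fin 2 → ℝ) : cf (c • t) = c ^ 2 * cf t := by
  simp only [cf, Pi.smul_apply, smul_eq_mul]; ring

lemma sq_mul_nonneg_iff {c x : ℝ} (hc : c ≠ 0) : 0 ≤ c ^ 2 * x ↔ 0 ≤ x :=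
  mul_nonneg_iff_of_pos_left (by positivity)

def C1 : Set (RP 2) := {x | ∃ t : V, Quot.mk (projRel 2) t = x ∧ 0 ≤ cf t.val}
def C2 : Set (RP 2) := {x | ∃ t : V, Quot.mk (projRel 2) t = x ∧ 0 ≤ bf t.val}

lemma preimage_C1 : Quot.mk (projRel 2) ⁻¹' C1 = {t : V | 0 ≤ cf t.val} := by
  ext t
  constructor
  · rintro ⟨t', ht', hc⟩
    obtain ⟨c, hc0, hsm⟩ := mk_eq_mk_iff.mp ht'
    have : (t : Fin 2 → ℝ) = c • (t' : Fin 2 → ℝ) := hsm.symm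
    simpa [Set.mem_setOf_eq, this, cf_smul, sq_mul_nonneg_iff hc0] using hc
  · intro h; exact ⟨t, rfl, h⟩

lemma preimage_C2 : Quot.mk (projRel 2) ⁻¹' C2 = {t : V | 0 ≤ bf t.val} := by
  ext t
  constructor
  · rintro ⟨t', ht', hc⟩
    obtain ⟨c, hc0, hsm⟩ := mk_eq_mk_iff.mp ht'
    have : (t : Fin 2 → ℝ) = c • (t' : Fin 2 → ℝ) := hsm.symm
    simpa [Set.mem_setOf_eq, this, bf_smul, sq_mul_nonneg_iff hc0] using hc
  · intro h; exact ⟨t, rfl, h⟩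

lemma isClosed_C1 : IsClosed C1 := by
  apply (isQuotientMap_quot_mk (r := projRel 2)).isClosed_preimage.mp
  rw [preimage_C1]
  have : Continuous fun t : V => cf t.val := by
    have h0 : Continuous fun t : V => (t : Fin 2 → ℝ) 0 := (continuous_apply 0).comp continuous_subtype_val
    have h1 : Continuous fun t : V => (t : Fin 2 → ℝ) 1 := (continuous_apply 1).comp continuous_subtype_val
    exact (h1.pow 2).sub (h0.pow 2)
  exact isClosed_le continuous_const this

lemma isClosed_C2 : IsClosed C2 := by
  apply (isQuotientMap_quot_mk (r := projRel 2)).isClosed_preimage.mp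
  rw [preimage_C2]
  have : Continuous fun t : V => bf t.val := by
    have h0 : Continuous fun t : V => (t : Fin 2 → ℝ) 0 := (continuous_apply 0).comp continuous_subtype_val
    have h1 : Continuous fun t : V => (t : Fin 2 → ℝ) 1 := (continuous_apply 1).comp continuous_subtype_val
    exact ((h0.pow 2).add ((continuous_const.mul h0).mul h1)).sub (continuous_const.mul (h1.pow 2))
  exact isClosed_le continuous_const this

lemma C1_disjoint_C2 : ∀ x, x ∈ C1 → x ∈ C2 → False := by
  rintro x ⟨t, ht, hc⟩ ⟨t', ht', hb⟩
  obtain ⟨c, hc0, hsm⟩ := mk_eq_mk_iff.mp (ht'.trans ht.symm)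
  have hb' : 0 ≤ bf t.val := by
    rw [← hsm, bf_smul, sq_mul_nonneg_iff hc0]; exact hb
  have h1 : (t : Fin 2 → ℝ) 1 = 0 := by
    have h2 : (t : Fin 2 → ℝ) 1 ^ 2 ≤ 0 := by
      unfold bf at hb'
      unfold cf at hc
      nlinarith [sq_nonneg ((t : Fin 2 → ℝ) 0 - (t : Fin 2 → ℝ) 1),
        sq_nonneg ((t : Fin 2 → ℝ) 0 + (t : Fin 2 → ℝ) 1)]
    nlinarith [sq_nonneg ((t : Fin 2 → ℝ) 1)]
  have h0 : (t : Fin 2 → ℝ) 0 = 0 := by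
    unfold cf at hc
    nlinarith [sq_nonneg ((t : Fin 2 → ℝ) 0)]
  exact t.prop (funext fun i => by fin_cases i <;> simpa [h0, h1])


noncomputable section

/-- base point of `C1`: `[0:1]`. -/
def e1 : V := ⟨![0, 1], by
  intro h; have := congrFun h 1; simp at this⟩

/-- base point of `C2`: `[1:0]`. -/
def e0 : V := ⟨![1, 0], by
  intro h; have := congrFun h 0; simp at this⟩

def Z1 : Set V := {t | |(t : Fin 2 → ℝ) 0| ≤ (t : Fin 2 → ℝ) 1}
def Z2 : Set V := {t | 0 ≤ (t : Fin 2 → ℝ) 0 + 5 * (t : Fin 2 → ℝ) 1 ∧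
  0 ≤ (t : Fin 2 → ℝ) 0 - 3 * (t : Fin 2 → ℝ) 1}

lemma e1_mem_Z1 : e1 ∈ Z1 := by simp [Z1, e1]

lemma e0_mem_Z2 : e0 ∈ Z2 := by simp [Z2, e0]

lemma Z1_pos {p : V} (hp : p ∈ Z1) : 0 < (p : Fin 2 → ℝ) 1 := by
  have hp' : |(p : Fin 2 → ℝ) 0| ≤ (p : Fin 2 → ℝ) 1 := hp
  rcases lt_or_eq_of_le (le_trans (abs_nonneg _) hp') with h | h
  · exact h
  · exfalso
    have h0 : (p : Fin 2 → ℝ) 0 = 0 := by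
      have := hp'; rw [← h] at this
      exact abs_eq_zero.mp (le_antisymm this (abs_nonneg _))
    exact p.prop (funext fun i => by fin_cases i <;> simp [h0, ← h])

lemma Z2_pos {p : V} (hp : p ∈ Z2) : 0 < (p : Fin 2 → ℝ) 0 := by
  obtain ⟨h1, h2⟩ := hp
  have h0 : 0 ≤ (p : Fin 2 → ℝ) 0 := by linarith
  rcases lt_or_eq_of_le h0 with h | h
  · exact h
  · exfalso
    have hp1 : (p : Fin 2 → ℝ) 1 = 0 := by rw [← h] at h1 h2; linarith
    exact p.prop (funext fun i => by fin_cases i <;> simp [hp1, ← h])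

lemma isPathConnected_Z1 : IsPathConnected Z1 := by
  refine ⟨e1, e1_mem_Z1, ?_⟩
  intro p hp
  have hp1 : 0 < (p : Fin 2 → ℝ) 1 := Z1_pos hp
  -- segment from e1 to p avoiding 0: at time s we are at (1-s)•e1 + s•p
  have key : ∀ s : ℝ, 0 ≤ s → s ≤ 1 →
      ((1 - s) • (e1 : Fin 2 → ℝ) + s • (p : Fin 2 → ℝ)) ≠ 0 ∧
      |((1 - s) • (e1 : Fin 2 → ℝ) + s • (p : Fin 2 → ℝ)) 0| ≤
        ((1 - s) • (e1 : Fin 2 → ℝ) + s • (p : Fin 2 → ℝ)) 1 := by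
    intro s h0 h1
    have hval0 : ((1 - s) • (e1 : Fin 2 → ℝ) + s • (p : Fin 2 → ℝ)) 0 =
        s * (p : Fin 2 → ℝ) 0 := by simp [e1]
    have hval1 : ((1 - s) • (e1 : Fin 2 → ℝ) + s • (p : Fin 2 → ℝ)) 1 =
        (1 - s) + s * (p : Fin 2 → ℝ) 1 := by simp [e1]
    have hpos : 0 < ((1 - s) • (e1 : Fin 2 → ℝ) + s • (p : Fin 2 → ℝ)) 1 := by
      rw [hval1]
      rcases lt_or_eq_of_le h0 with hs | hs
      · nlinarith
      · rw [← hs]; norm_num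
    refine ⟨fun h => by rw [h] at hpos; simp at hpos, ?_⟩
    rw [hval0, hval1, abs_mul, abs_of_nonneg h0]
    have hm : |(p : Fin 2 → ℝ) 0| ≤ (p : Fin 2 → ℝ) 1 := hp
    nlinarith [abs_nonneg ((p : Fin 2 → ℝ) 0), mul_nonneg h0 (sub_nonneg.mpr hm)]
  refine ⟨⟨⟨fun s => ⟨(1 - (s : ℝ)) • (e1 : Fin 2 → ℝ) + (s : ℝ) • (p : Fin 2 → ℝ),
      (key s s.2.1 s.2.2).1⟩, ?_⟩, ?_, ?_⟩, fun s => (key s s.2.1 s.2.2).2⟩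
  · refine Continuous.subtype_mk ?_ _
    exact (((continuous_const.sub continuous_subtype_val).smul continuous_const).add
      (continuous_subtype_val.smul continuous_const))
  · ext : 1; simp
  · ext : 1; simp

lemma isPathConnected_Z2 : IsPathConnected Z2 := by
  refine ⟨e0, e0_mem_Z2, ?_⟩
  intro p hp
  have hp0 : 0 < (p : Fin 2 → ℝ) 0 := Z2_pos hp
  obtain ⟨hpa, hpb⟩ := hp
  have key : ∀ s : ℝ, 0 ≤ s → s ≤ 1 →
      ((1 - s) • (e0 : Fin 2 → ℝ) + s • (p : Fin 2 → ℝ)) ≠ 0 ∧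
      (0 ≤ ((1 - s) • (e0 : Fin 2 → ℝ) + s • (p : Fin 2 → ℝ)) 0 +
        5 * ((1 - s) • (e0 : Fin 2 → ℝ) + s • (p : Fin 2 → ℝ)) 1 ∧
       0 ≤ ((1 - s) • (e0 : Fin 2 → ℝ) + s • (p : Fin 2 → ℝ)) 0 -
        3 * ((1 - s) • (e0 : Fin 2 → ℝ) + s • (p : Fin 2 → ℝ)) 1) := by
    intro s h0 h1
    have hval0 : ((1 - s) • (e0 : Fin 2 → ℝ) + s • (p : Fin 2 → ℝ)) 0 =
        (1 - s) + s * (p : Fin 2 → ℝ) 0 := by simp [e0]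
    have hval1 : ((1 - s) • (e0 : Fin 2 → ℝ) + s • (p : Fin 2 → ℝ)) 1 =
        s * (p : Fin 2 → ℝ) 1 := by simp [e0]
    have hpos : 0 < ((1 - s) • (e0 : Fin 2 → ℝ) + s • (p : Fin 2 → ℝ)) 0 := by
      rw [hval0]
      rcases lt_or_eq_of_le h0 with hs | hs
      · nlinarith
      · rw [← hs]; norm_num
    refine ⟨fun h => by rw [h] at hpos; simp at hpos, ?_, ?_⟩
    · rw [hval0, hval1]; nlinarith
    · rw [hval0, hval1]; nlinarith
  refine ⟨⟨⟨fun s => ⟨(1 - (s : ℝ)) • (e0 : Fin 2 → ℝ) + (s : ℝ) • (p : Fin 2 → ℝ),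
      (key s s.2.1 s.2.2).1⟩, ?_⟩, ?_, ?_⟩, fun s => (key s s.2.1 s.2.2).2⟩
  · refine Continuous.subtype_mk ?_ _
    exact (((continuous_const.sub continuous_subtype_val).smul continuous_const).add
      (continuous_subtype_val.smul continuous_const))
  · ext : 1; simp
  · ext : 1; simp


lemma neg_mk_eq {t : V} : Quot.mk (projRel 2) ⟨-(t : Fin 2 → ℝ), neg_ne_zero.mpr t.prop⟩
    = Quot.mk (projRel 2) t := by
  apply Quot.sound
  exact ⟨-1, by norm_num, by simp⟩

lemma abs_le_of_sq_le_sq {a b : ℝ} (h : a ^ 2 ≤ b ^ 2) (hb : 0 ≤ b) : |a| ≤ b := by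
  nlinarith [sq_abs a, abs_nonneg a]

lemma C1_eq_image : C1 = Quot.mk (projRel 2) '' Z1 := by
  ext x
  constructor
  · rintro ⟨t, ht, hc⟩
    have hc' : (t : Fin 2 → ℝ) 0 ^ 2 ≤ (t : Fin 2 → ℝ) 1 ^ 2 := by
      unfold cf at hc; linarith
    rcases le_or_gt 0 ((t : Fin 2 → ℝ) 1) with h | h
    · exact ⟨t, abs_le_of_sq_le_sq hc' h, ht⟩
    · refine ⟨⟨-(t : Fin 2 → ℝ), neg_ne_zero.mpr t.prop⟩, ?_, neg_mk_eq.trans ht⟩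
      show |(-(t : Fin 2 → ℝ)) 0| ≤ (-(t : Fin 2 → ℝ)) 1
      simp only [Pi.neg_apply, abs_neg]
      exact abs_le_of_sq_le_sq (by nlinarith) (by linarith)
  · rintro ⟨t, hmem, ht⟩
    refine ⟨t, ht, ?_⟩
    have hm : |(t : Fin 2 → ℝ) 0| ≤ (t : Fin 2 → ℝ) 1 := hmem
    unfold cf
    nlinarith [sq_abs ((t : Fin 2 → ℝ) 0), abs_nonneg ((t : Fin 2 → ℝ) 0)]

lemma C2_eq_image : C2 = Quot.mk (projRel 2) '' Z2 := by
  ext x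
  constructor
  · rintro ⟨t, ht, hb⟩
    have hb' : 0 ≤ ((t : Fin 2 → ℝ) 0 + 5 * (t : Fin 2 → ℝ) 1) *
        ((t : Fin 2 → ℝ) 0 - 3 * (t : Fin 2 → ℝ) 1) := by
      unfold bf at hb; nlinarith
    rcases mul_nonneg_iff.mp hb' with ⟨h1, h2⟩ | ⟨h1, h2⟩
    · exact ⟨t, ⟨h1, h2⟩, ht⟩
    · refine ⟨⟨-(t : Fin 2 → ℝ), neg_ne_zero.mpr t.prop⟩, ?_, neg_mk_eq.trans ht⟩
      constructor
      · show 0 ≤ (-(t : Fin 2 → ℝ)) 0 + 5 * (-(t : Fin 2 → ℝ)) 1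
        simp only [Pi.neg_apply]; linarith
      · show 0 ≤ (-(t : Fin 2 → ℝ)) 0 - 3 * (-(t : Fin 2 → ℝ)) 1
        simp only [Pi.neg_apply]; linarith
  · rintro ⟨t, ⟨h1, h2⟩, ht⟩
    refine ⟨t, ht, ?_⟩
    unfold bf
    nlinarith [mul_nonneg h1 h2]

lemma isConnected_C1 : IsConnected C1 := by
  rw [C1_eq_image]
  exact (isPathConnected_Z1.isConnected).image _ (continuous_quot_mk.continuousOn)

lemma isConnected_C2 : IsConnected C2 := by
  rw [C2_eq_image]
  exact (isPathConnected_Z2.isConnected).image _ (continuous_quot_mk.continuousOn)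

lemma mk_e1_mem_C1 : Quot.mk (projRel 2) e1 ∈ C1 :=
  ⟨e1, rfl, by norm_num [cf, e1]⟩

lemma mk_e0_mem_C2 : Quot.mk (projRel 2) e0 ∈ C2 :=
  ⟨e0, rfl, by norm_num [bf, e0]⟩

/-- pointwise criterion. -/
lemma exists_iff (t : V) :
    (∃ u v w : ℝ, (u, v, w) ≠ (0, 0, 0) ∧
        0 ≤ (t : Fin 2 → ℝ) 0 ^ 2 * Q₁ u v w
          + 2 * (t : Fin 2 → ℝ) 0 * (t : Fin 2 → ℝ) 1 * Q₂ u v w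
          + (t : Fin 2 → ℝ) 1 ^ 2 * Q₃ u v w) ↔
      (0 ≤ cf t.val ∨ 0 ≤ bf t.val) := by
  set t0 := (t : Fin 2 → ℝ) 0 with ht0
  set t1 := (t : Fin 2 → ℝ) 1 with ht1
  constructor
  · rintro ⟨u, v, w, hne, hval⟩
    by_contra hcon
    push_neg at hcon
    obtain ⟨hc, hb⟩ := hcon
    have hexp : t0 ^ 2 * Q₁ u v w + 2 * t0 * t1 * Q₂ u v w + t1 ^ 2 * Q₃ u v w =
        (bf t.val - 9 * t1 ^ 2) * u ^ 2 + bf t.val * v ^ 2 + cf t.val * w ^ 2 := by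
      simp only [Q₁, Q₂, Q₃, bf, cf, ← ht0, ← ht1]; ring
    rw [hexp] at hval
    have ha : bf t.val - 9 * t1 ^ 2 < 0 := by nlinarith [sq_nonneg t1]
    have hX : (bf t.val - 9 * t1 ^ 2) * u ^ 2 ≤ 0 :=
      mul_nonpos_of_nonpos_of_nonneg ha.le (sq_nonneg u)
    have hY : bf t.val * v ^ 2 ≤ 0 := mul_nonpos_of_nonpos_of_nonneg hb.le (sq_nonneg v)
    have hZ : cf t.val * w ^ 2 ≤ 0 := mul_nonpos_of_nonpos_of_nonneg hc.le (sq_nonneg w)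
    have hu : u = 0 := by
      have h2 : u ^ 2 = 0 := by nlinarith
      exact pow_eq_zero_iff two_ne_zero |>.mp h2
    have hv : v = 0 := by
      have h2 : v ^ 2 = 0 := by nlinarith
      exact pow_eq_zero_iff two_ne_zero |>.mp h2
    have hw : w = 0 := by
      have h2 : w ^ 2 = 0 := by nlinarith
      exact pow_eq_zero_iff two_ne_zero |>.mp h2
    exact hne (by rw [hu, hv, hw])
  · rintro (hc | hb)
    · refine ⟨0, 0, 1, by simp, ?_⟩
      have : t0 ^ 2 * Q₁ 0 0 1 + 2 * t0 * t1 * Q₂ 0 0 1 + t1 ^ 2 * Q₃ 0 0 1 = cf t.val := by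
        simp only [Q₁, Q₂, Q₃, cf, ← ht0, ← ht1]; ring
      rw [this]; exact hc
    · refine ⟨0, 1, 0, by simp, ?_⟩
      have : t0 ^ 2 * Q₁ 0 1 0 + 2 * t0 * t1 * Q₂ 0 1 0 + t1 ^ 2 * Q₃ 0 1 0 = bf t.val := by
        simp only [Q₁, Q₂, Q₃, bf, ← ht0, ← ht1]; ring
      rw [this]; exact hb

end

end TwoOvals

open TwoOvals in
/-- For the quadrics `Q₁ = u²+v²−w²`, `Q₂ = u²+v²`, `Q₃ = −24u²−15v²+w²`, the image
`S₁ ⊆ ℝP¹` of the real points of the quadric surface bundle `π₁ : Y → ℙ¹` has exactly two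
connected components; consequently `Y(ℝ)` has exactly two connected components (here the
real isotopy class of the discriminant quartic `Δ` is two nested ovals). -/
theorem two_nested_ovals_example_two_components
    (S₁ : Set (RP 2))
    (hS₁ : S₁ = {x | ∃ t : {x : Fin 2 → ℝ // x ≠ 0}, Quot.mk (projRel 2) t = x ∧
      ∃ u v w : ℝ, (u, v, w) ≠ (0, 0, 0) ∧
        0 ≤ (t : Fin 2 → ℝ) 0 ^ 2 * Q₁ u v w
          + 2 * (t : Fin 2 → ℝ) 0 * (t : Fin 2 → ℝ) 1 * Q₂ u v w
          + (t : Fin 2 → ℝ) 1 ^ 2 * Q₃ u v w}) :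
    Nonempty (ConnectedComponents ↥S₁ ≃ Fin 2) := by
  classical
  have hS : S₁ = C1 ∪ C2 := by
    rw [hS₁]
    ext x
    simp only [Set.mem_setOf_eq, Set.mem_union]
    constructor
    · rintro ⟨t, ht, hcond⟩
      rcases (exists_iff t).mp hcond with h | h
      · exact Or.inl ⟨t, ht, h⟩
      · exact Or.inr ⟨t, ht, h⟩
    · rintro (⟨t, ht, h⟩ | ⟨t, ht, h⟩)
      · exact ⟨t, ht, (exists_iff t).mpr (Or.inl h)⟩
      · exact ⟨t, ht, (exists_iff t).mpr (Or.inr h)⟩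
  have hmem : ∀ x : ↥S₁, (x : RP 2) ∈ C1 ∨ (x : RP 2) ∈ C2 := by
    intro x
    exact (Set.ext_iff.mp hS (x : RP 2)).mp x.2
  set f : ↥S₁ → Fin 2 := fun x => if (x : RP 2) ∈ C1 then 0 else 1 with hfdef
  have fiber0 : f ⁻¹' {0} = Subtype.val ⁻¹' C1 := by
    ext x
    by_cases h : (x : RP 2) ∈ C1 <;> simp [hfdef, h]
  have fiber1 : f ⁻¹' {1} = Subtype.val ⁻¹' C2 := by
    ext x
    by_cases h : (x : RP 2) ∈ C1
    · have : (x : RP 2) ∉ C2 := fun h2 => C1_disjoint_C2 _ h h2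
      simp [hfdef, h, this]
    · have : (x : RP 2) ∈ C2 := (hmem x).resolve_left h
      simp [hfdef, h, this]
  have hA_eq : (Subtype.val ⁻¹' C1 : Set ↥S₁) = (Subtype.val ⁻¹' C2)ᶜ := by
    ext x
    simp only [Set.mem_preimage, Set.mem_compl_iff]
    exact ⟨fun h h2 => C1_disjoint_C2 _ h h2, fun h => (hmem x).resolve_right h⟩
  have hAclosed : IsClosed (Subtype.val ⁻¹' C1 : Set ↥S₁) :=
    isClosed_C1.preimage continuous_subtype_val
  have hBclosed : IsClosed (Subtype.val ⁻¹' C2 : Set ↥S₁) :=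
    isClosed_C2.preimage continuous_subtype_val
  have hAopen : IsOpen (Subtype.val ⁻¹' C1 : Set ↥S₁) := by
    rw [hA_eq]; exact hBclosed.isOpen_compl
  have hBopen : IsOpen (Subtype.val ⁻¹' C2 : Set ↥S₁) := by
    have : (Subtype.val ⁻¹' C2 : Set ↥S₁) = (Subtype.val ⁻¹' C1)ᶜ := by
      rw [hA_eq, compl_compl]
    rw [this]; exact hAclosed.isOpen_compl
  have hf : Continuous f := by
    apply IsLocallyConstant.continuous
    rw [IsLocallyConstant.iff_isOpen_fiber]
    intro y
    fin_cases y
    · show IsOpen (f ⁻¹' {0}); rw [fiber0]; exact hAopen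
    · show IsOpen (f ⁻¹' {1}); rw [fiber1]; exact hBopen
  -- the two marked points
  have hx1mem : Quot.mk (projRel 2) e1 ∈ S₁ := by rw [hS]; exact Or.inl mk_e1_mem_C1
  have hx0mem : Quot.mk (projRel 2) e0 ∈ S₁ := by rw [hS]; exact Or.inr mk_e0_mem_C2
  have hfsurj : Function.Surjective f := by
    intro y
    fin_cases y
    · exact ⟨⟨_, hx1mem⟩, if_pos mk_e1_mem_C1⟩
    · exact ⟨⟨_, hx0mem⟩, if_neg (fun h => C1_disjoint_C2 _ h mk_e0_mem_C2)⟩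
  have hfiberconn : ∀ y : Fin 2, IsPreconnected (f ⁻¹' {y}) := by
    intro y
    have key : ∀ (C : Set (RP 2)), IsPreconnected C → C ⊆ S₁ →
        IsPreconnected (Subtype.val ⁻¹' C : Set ↥S₁) := by
      intro C hC hsub
      rw [← Topology.IsInducing.subtypeVal.isPreconnected_image]
      rwa [Subtype.image_preimage_coe, Set.inter_eq_right.mpr hsub]
    fin_cases y
    · show IsPreconnected (f ⁻¹' {0})
      rw [fiber0]
      exact key _ isConnected_C1.isPreconnected (by rw [hS]; exact Set.subset_union_left)
    · show IsPreconnected (f ⁻¹' {1})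
      rw [fiber1]
      exact key _ isConnected_C2.isPreconnected (by rw [hS]; exact Set.subset_union_right)
  set g := hf.connectedComponentsLift with hg
  have hgsurj : Function.Surjective g := by
    intro y
    obtain ⟨x, hx⟩ := hfsurj y
    exact ⟨x, by rw [hg, hf.connectedComponentsLift_apply_coe, hx]⟩
  have hginj : Function.Injective g := by
    intro a b hab
    obtain ⟨x, rfl⟩ := ConnectedComponents.surjective_coe a
    obtain ⟨y, rfl⟩ := ConnectedComponents.surjective_coe b
    rw [hg, hf.connectedComponentsLift_apply_coe, hf.connectedComponentsLift_apply_coe] at hab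
    have hx : x ∈ f ⁻¹' {f y} := by simp [Set.mem_preimage, hab]
    have hy : y ∈ f ⁻¹' {f y} := rfl
    have hsub := (hfiberconn (f y)).subset_connectedComponent hy
    rw [ConnectedComponents.coe_eq_coe]
    exact (connectedComponent_eq (hsub hx)).symm
  exact ⟨Equiv.ofBijective g ⟨hginj, hgsurj⟩⟩
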